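/- Let t ≥ 2 be an integer. There is a positive constant C = C(t) such that for all sufficiently large n, f(n, K_{2,t}) ≥ C·n^{1/3}. In particular, one may take C = t^{−1/3} − o(1): for every ε > 0 and all sufficiently large n, f(n, K_{2,t}) ≥ (t^{−1/3} − ε)·n^{1/3}. -/

import Mathlib

/-- `G` contains a copy of `H`, i.e. a subgraph isomorphic to `H`. -/
def SimpleGraph.ContainsCopy {α β : Type*} (G : SimpleGraph α) (H : SimpleGraph β) : Prop :=
  ∃ f : β → α, Function.Injective f ∧ ∀ ⦃a b : β⦄, H.Adj a b → G.Adj (f a) (f b)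

/-- `G` is an `(n,k)`-graph: its vertex set is the pairwise disjoint union of `n` nonempty
parts, each of size at most `k`, and between any two distinct parts there is exactly one
edge of `G` with one endpoint in each part. -/
def SimpleGraph.IsNKGraph {V : Type*} (G : SimpleGraph V) (n k : ℕ) : Prop :=
  ∃ P : Fin n → Finset V,
    (∀ i, (P i).Nonempty) ∧
    (∀ i, (P i).card ≤ k) ∧
    (∀ v : V, ∃! i, v ∈ P i) ∧
    (∀ i j, i ≠ j → ∃! e : V × V, e.1 ∈ P i ∧ e.2 ∈ P j ∧ G.Adj e.1 e.2)

/-- There is an `(n,k)`-graph containing no subgraph isomorphic to `H`. -/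
def ExistsNKGraphFree (n k : ℕ) {β : Type*} (H : SimpleGraph β) : Prop :=
  ∃ (N : ℕ) (G : SimpleGraph (Fin N)), G.IsNKGraph n k ∧ ¬ G.ContainsCopy H

/-- The split function `f(n,H)`: the least `k` such that some `(n,k)`-graph is `H`-free. -/
noncomputable def splitNumber (n : ℕ) {β : Type*} (H : SimpleGraph β) : ℕ :=
  sInf {k : ℕ | ExistsNKGraphFree n k H}

/-- The Turán (extremal) number `ex(ℓ,H)`: the maximum number of edges in a simple graph
on `ℓ` vertices containing no subgraph isomorphic to `H`. -/
noncomputable def exNumber (ℓ : ℕ) {β : Type*} (H : SimpleGraph β) : ℕ :=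
  sSup {m : ℕ | ∃ G : SimpleGraph (Fin ℓ), ¬ G.ContainsCopy H ∧ G.edgeSet.ncard = m}

open Finset in
lemma existsNKGraphFree_matching (t n : ℕ) (ht : 2 ≤ t) :
    ExistsNKGraphFree n n (completeBipartiteGraph (Fin 2) (Fin t)) := by
  classical
  set e : Fin n × Fin n ≃ Fin (n * n) := finProdFinEquiv with he
  refine ⟨n * n, ⟨fun v w => v ≠ w ∧ Prod.swap (e.symm v) = e.symm w, ?_, ?_⟩, ?_, ?_⟩
  · -- symm
    constructor; rintro v w ⟨h1, h2⟩
    exact ⟨h1.symm, by rw [← h2, Prod.swap_swap]⟩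
  · -- loopless
    constructor; intro v h; exact h.1 rfl
  · -- IsNKGraph
    refine ⟨fun i => univ.filter fun v => (e.symm v).1 = i, ?_, ?_, ?_, ?_⟩
    · intro i
      exact ⟨e (i, i), by simp⟩
    · intro i
      calc (univ.filter fun v => (e.symm v).1 = i).card
          ≤ (univ : Finset (Fin n)).card := by
            apply Finset.card_le_card_of_injOn (fun v => (e.symm v).2)
            · intro v _; exact mem_univ _
            · intro v hv w hw hvw
              simp only [mem_coe, mem_filter] at hv hw
              have : e.symm v = e.symm w := Prod.ext (hv.2.trans hw.2.symm) hvw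
              exact e.symm.injective this
        _ = n := by simp
    · intro v
      refine ⟨(e.symm v).1, by simp, ?_⟩
      intro j hj
      simp only [mem_filter] at hj
      exact hj.2.symm
    · intro i j hij
      refine ⟨(e (i, j), e (j, i)), ⟨by simp, by simp, ?_, ?_⟩, ?_⟩
      · -- ne
        intro h
        have := congrArg Prod.fst (e.injective h)
        exact hij this
      · simp
      · rintro ⟨u, v⟩ ⟨hu, hv, hne, hsw⟩
        simp only [mem_filter, mem_univ, true_and] at hu hv
        have h2 : (e.symm u).2 = j := by
          have := congrArg Prod.fst hsw
          simpa [hv] using this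
        have h1 : (e.symm v).2 = i := by
          have := congrArg Prod.snd hsw
          simp only [Prod.snd_swap] at this
          rw [← this, hu]
        have hu' : e.symm u = (i, j) := Prod.ext hu h2
        have hv' : e.symm v = (j, i) := Prod.ext hv h1
        have : u = e (i, j) := by rw [← hu']; simp
        have : v = e (j, i) := by rw [← hv']; simp
        refine Prod.ext ?_ ?_ <;> simp_all
  · -- free
    rintro ⟨f, hinj, hmap⟩
    have h0 : (completeBipartiteGraph (Fin 2) (Fin t)).Adj (Sum.inl 0) (Sum.inr ⟨0, by omega⟩) := by
      simp
    have h1 : (completeBipartiteGraph (Fin 2) (Fin t)).Adj (Sum.inl 0) (Sum.inr ⟨1, by omega⟩) := by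
      simp
    have g0 := hmap h0
    have g1 := hmap h1
    have : f (Sum.inr ⟨0, by omega⟩) = f (Sum.inr ⟨1, by omega⟩) := by
      have := g0.2.symm.trans g1.2
      exact e.symm.injective this
    have := hinj this
    simp at this

open Finset

lemma common_nbrs_le (t N : ℕ) (ht : 2 ≤ t) (G : SimpleGraph (Fin N)) [DecidableRel G.Adj]
    (hfree : ¬ G.ContainsCopy (completeBipartiteGraph (Fin 2) (Fin t)))
    (u w : Fin N) (huw : u ≠ w) :
    ((G.neighborFinset u) ∩ (G.neighborFinset w)).card ≤ t - 1 := by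
  by_contra hcon
  push_neg at hcon
  obtain ⟨s, hs, hcard⟩ := Finset.exists_subset_card_eq
    (show t ≤ ((G.neighborFinset u) ∩ (G.neighborFinset w)).card by omega)
  set g : Fin t → Fin N := fun j => ((Finset.equivFinOfCardEq hcard).symm j : Fin N) with hg
  have hginj : Function.Injective g := fun a b hab => by
    have := Subtype.ext hab
    exact (Finset.equivFinOfCardEq hcard).symm.injective this
  have hgadj : ∀ j, G.Adj u (g j) ∧ G.Adj w (g j) := by
    intro j
    have hmem := hs ((Finset.equivFinOfCardEq hcard).symm j).2
    simp only [mem_inter, SimpleGraph.mem_neighborFinset] at hmem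
    exact hmem
  apply hfree
  refine ⟨Sum.elim (fun i : Fin 2 => if i = 0 then u else w) g, ?_, ?_⟩
  · rintro (i | j) (i' | j') hab <;> simp only [Sum.elim_inl, Sum.elim_inr] at hab
    · congr 1
      fin_cases i <;> fin_cases i' <;> simp_all
    · exfalso
      rcases hab with hab
      split_ifs at hab
      · exact G.ne_of_adj (hgadj j').1 hab
      · exact G.ne_of_adj (hgadj j').2 hab
    · exfalso
      split_ifs at hab
      · exact G.ne_of_adj (hgadj j).1 hab.symm
      · exact G.ne_of_adj (hgadj j).2 hab.symm
    · rw [hginj hab]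
  · rintro (i | j) (i' | j') hab <;> simp only [completeBipartiteGraph] at hab <;>
      simp only [Sum.elim_inl, Sum.elim_inr] <;> simp at hab
    · split_ifs
      · exact (hgadj j').1
      · exact (hgadj j').2
    · split_ifs
      · exact ((hgadj j).1).symm
      · exact ((hgadj j).2).symm

lemma cherry_count (t N : ℕ) (ht : 2 ≤ t) (G : SimpleGraph (Fin N)) [DecidableRel G.Adj]
    (hfree : ¬ G.ContainsCopy (completeBipartiteGraph (Fin 2) (Fin t))) :
    ∑ v : Fin N, (G.neighborFinset v).offDiag.card ≤ (t - 1) * (N * N - N) := by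
  classical
  set T : Finset (Fin N × Fin N × Fin N) :=
    univ.filter fun x => G.Adj x.1 x.2.1 ∧ G.Adj x.1 x.2.2 ∧ x.2.1 ≠ x.2.2 with hT
  have h1 : T.card = ∑ v : Fin N, (G.neighborFinset v).offDiag.card := by
    rw [Finset.card_eq_sum_card_fiberwise (f := fun x => x.1) (t := univ) (fun x _ => mem_univ _)]
    refine Finset.sum_congr rfl fun v _ => ?_
    refine Finset.card_bij (fun x _ => x.2) ?_ ?_ ?_
    · intro x hx
      simp only [hT, mem_filter, mem_univ, true_and] at hx
      obtain ⟨⟨ha1, ha2, hne⟩, hv⟩ := hx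
      rw [Finset.mem_offDiag]
      subst hv
      exact ⟨by rwa [SimpleGraph.mem_neighborFinset], by rwa [SimpleGraph.mem_neighborFinset], hne⟩
    · intro x hx y hy hxy
      simp only [hT, mem_filter] at hx hy
      exact Prod.ext (hx.2.trans hy.2.symm) hxy
    · intro b hb
      rw [Finset.mem_offDiag] at hb
      refine ⟨(v, b), Finset.mem_filter.2 ⟨Finset.mem_filter.2 ⟨mem_univ _, ?_, ?_, hb.2.2⟩, rfl⟩, rfl⟩
      · exact (SimpleGraph.mem_neighborFinset _ _ _).1 hb.1
      · exact (SimpleGraph.mem_neighborFinset _ _ _).1 hb.2.1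
  have h2 : T.card ≤ (t - 1) * (N * N - N) := by
    rw [Finset.card_eq_sum_card_fiberwise (f := fun x => x.2) (t := (univ : Finset (Fin N)).offDiag)
      (fun x hx => by
        simp only [mem_coe, hT, mem_filter, mem_univ, true_and] at hx
        exact Finset.mem_offDiag.2 ⟨mem_univ _, mem_univ _, hx.2.2⟩)]
    calc ∑ p ∈ (univ : Finset (Fin N)).offDiag, (T.filter fun x => x.2 = p).card
        ≤ ∑ p ∈ (univ : Finset (Fin N)).offDiag, (t - 1) := by
          refine Finset.sum_le_sum fun p hp => ?_
          rw [Finset.mem_offDiag] at hp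
          calc (T.filter fun x => x.2 = p).card
              ≤ ((G.neighborFinset p.1) ∩ (G.neighborFinset p.2)).card := by
                apply Finset.card_le_card_of_injOn (fun x => x.1)
                · intro x hx
                  simp only [mem_coe, hT, mem_filter, mem_univ, true_and] at hx
                  obtain ⟨⟨ha1, ha2, _⟩, hp2⟩ := hx
                  subst hp2
                  simp only [mem_coe, mem_inter, SimpleGraph.mem_neighborFinset]
                  exact ⟨ha1.symm, ha2.symm⟩
                · intro x hx y hy hxy
                  simp only [mem_coe, hT, mem_filter] at hx hy
                  exact Prod.ext hxy (hx.2.trans hy.2.symm)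
            _ ≤ t - 1 := common_nbrs_le t N ht G hfree p.1 p.2 hp.2.2
      _ = (univ : Finset (Fin N)).offDiag.card * (t - 1) := by rw [Finset.sum_const, smul_eq_mul]
      _ = (t - 1) * (N * N - N) := by
          rw [Finset.offDiag_card]
          simp [mul_comm]
  omega

lemma edges_lower (n N : ℕ) (G : SimpleGraph (Fin N)) [DecidableRel G.Adj]
    (P : Fin n → Finset (Fin N)) (hmem : ∀ v, ∃! i, v ∈ P i)
    (hedge : ∀ i j, i ≠ j → ∃! e : Fin N × Fin N, e.1 ∈ P i ∧ e.2 ∈ P j ∧ G.Adj e.1 e.2) :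
    n * n - n ≤ 2 * G.edgeFinset.card := by
  classical
  rcases le_or_gt n 1 with hn | hn
  · interval_cases n <;> simp
  have h01 : (⟨0, by omega⟩ : Fin n) ≠ (⟨1, by omega⟩ : Fin n) := by
    intro h
    have := congrArg Fin.val h
    simp at this
  obtain ⟨e₀, he₀⟩ := (hedge ⟨0, by omega⟩ ⟨1, by omega⟩ h01).exists
  set φ : Fin n × Fin n → Fin N × Fin N :=
    fun p => if h : p.1 ≠ p.2 then (hedge p.1 p.2 h).exists.choose else e₀ with hφ
  have hφspec : ∀ p : Fin n × Fin n, p.1 ≠ p.2 →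
      (φ p).1 ∈ P p.1 ∧ (φ p).2 ∈ P p.2 ∧ G.Adj (φ p).1 (φ p).2 := by
    intro p hp
    simp only [hφ, dif_pos hp]
    exact (hedge p.1 p.2 hp).exists.choose_spec
  rw [SimpleGraph.two_mul_card_edgeFinset]
  calc n * n - n = (univ : Finset (Fin n)).offDiag.card := by rw [Finset.offDiag_card]; simp
    _ ≤ _ := by
        apply Finset.card_le_card_of_injOn φ
        · intro p hp
          rw [mem_coe, Finset.mem_offDiag] at hp
          obtain ⟨_, _, hadj⟩ := hφspec p hp.2.2
          simp only [mem_coe, mem_filter, mem_univ, true_and]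
          exact hadj
        · intro p hp q hq hpq
          rw [mem_coe, Finset.mem_offDiag] at hp hq
          obtain ⟨hp1, hp2, _⟩ := hφspec p hp.2.2
          obtain ⟨hq1, hq2, _⟩ := hφspec q hq.2.2
          rw [hpq] at hp1 hp2
          exact Prod.ext ((hmem (φ q).1).unique hp1 hq1) ((hmem (φ q).2).unique hp2 hq2)

lemma vertex_count (n k N : ℕ) (P : Fin n → Finset (Fin N))
    (hcard : ∀ i, (P i).card ≤ k) (hmem : ∀ v, ∃! i, v ∈ P i) : N ≤ n * k := by
  classical
  have huniv : (univ : Finset (Fin N)) = (univ : Finset (Fin n)).biUnion P := by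
    ext v
    obtain ⟨i, hi, -⟩ := hmem v
    simp only [mem_univ, true_iff]
    exact Finset.mem_biUnion.2 ⟨i, mem_univ _, hi⟩
  have hdisj : ∀ i ∈ (univ : Finset (Fin n)), ∀ j ∈ univ, i ≠ j → Disjoint (P i) (P j) := by
    intro i _ j _ hij
    rw [Finset.disjoint_left]
    intro v hvi hvj
    exact hij (((hmem v).unique hvi hvj))
  calc N = (univ : Finset (Fin N)).card := by simp
    _ = ∑ i : Fin n, (P i).card := by rw [huniv, Finset.card_biUnion hdisj]
    _ ≤ ∑ _i : Fin n, k := Finset.sum_le_sum fun i _ => hcard i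
    _ = n * k := by simp [mul_comm]

lemma key_ineq (t n k : ℕ) (ht : 2 ≤ t)
    (h : ExistsNKGraphFree n k (completeBipartiteGraph (Fin 2) (Fin t))) :
    (n : ℝ) * n - n ≤ ((n * k : ℕ) : ℝ)
      + Real.sqrt ((t : ℝ) - 1) * Real.sqrt (((n * k : ℕ) : ℝ) ^ 3) := by
  classical
  obtain ⟨N, G, ⟨P, hne, hcard, hmem, hedge⟩, hfree⟩ := h
  haveI : DecidableRel G.Adj := Classical.decRel _
  have hN : N ≤ n * k := vertex_count n k N P hcard hmem
  have hE : n * n - n ≤ 2 * G.edgeFinset.card := edges_lower n N G P hmem hedge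
  have hC : ∑ v : Fin N, (G.neighborFinset v).offDiag.card ≤ (t - 1) * (N * N - N) :=
    cherry_count t N ht G hfree
  set m : ℕ := G.edgeFinset.card with hm
  have ht1 : (1:ℝ) ≤ (t:ℝ) := by exact_mod_cast (by omega : 1 ≤ t)
  have hdeg : ∀ v : Fin N, ((G.neighborFinset v).offDiag.card : ℝ)
      = (G.degree v : ℝ) ^ 2 - (G.degree v : ℝ) := by
    intro v
    have h1 : (G.neighborFinset v).offDiag.card = G.degree v * G.degree v - G.degree v := by
      rw [Finset.offDiag_card, G.card_neighborFinset_eq_degree]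
    have h2 : G.degree v ≤ G.degree v * G.degree v := by
      rcases Nat.eq_zero_or_pos (G.degree v) with h | h
      · simp [h]
      · exact Nat.le_mul_of_pos_left _ h
    rw [h1, Nat.cast_sub h2]
    push_cast
    ring
  have hsum : (∑ v : Fin N, (G.degree v : ℝ)) = 2 * (m : ℝ) := by
    exact_mod_cast congrArg (fun x : ℕ => (x : ℝ)) G.sum_degrees_eq_twice_card_edges
  have hCS : (∑ v : Fin N, (G.degree v : ℝ)) ^ 2 ≤ (N : ℝ) * ∑ v : Fin N, (G.degree v : ℝ) ^ 2 := by
    have := sq_sum_le_card_mul_sum_sq (s := (univ : Finset (Fin N)))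
      (f := fun v => (G.degree v : ℝ))
    simpa using this
  have hC2 : (∑ v : Fin N, ((G.neighborFinset v).offDiag.card : ℝ)) ≤ ((t:ℝ) - 1) * (N:ℝ)^2 := by
    have h1 : (∑ v : Fin N, ((G.neighborFinset v).offDiag.card : ℝ))
        ≤ (((t - 1) * (N * N - N) : ℕ) : ℝ) := by exact_mod_cast hC
    refine h1.trans ?_
    have h2 : N ≤ N * N := by nlinarith [Nat.zero_le N]
    rw [Nat.cast_mul, Nat.cast_sub (by omega : 1 ≤ t), Nat.cast_sub h2]
    push_cast
    nlinarith [Nat.cast_nonneg (α := ℝ) N, ht1]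
  have hSS : (∑ v : Fin N, (G.degree v : ℝ) ^ 2) ≤ ((t:ℝ) - 1) * (N:ℝ)^2 + 2 * (m:ℝ) := by
    have := Finset.sum_congr rfl (fun v (_ : v ∈ (univ : Finset (Fin N))) => hdeg v)
    rw [this, Finset.sum_sub_distrib, hsum] at hC2
    linarith
  have h4 : 4 * (m:ℝ)^2 ≤ ((t:ℝ) - 1) * (N:ℝ)^3 + 2 * (m:ℝ) * (N:ℝ) := by
    rw [hsum] at hCS
    nlinarith [Nat.cast_nonneg (α := ℝ) N, hSS]
  set s : ℝ := Real.sqrt ((t:ℝ) - 1) with hsdef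
  set R : ℝ := Real.sqrt ((N:ℝ)^3) with hRdef
  have hs0 : 0 ≤ s := Real.sqrt_nonneg _
  have hR0 : 0 ≤ R := Real.sqrt_nonneg _
  have hs2 : s^2 = (t:ℝ) - 1 := Real.sq_sqrt (by linarith)
  have hR2 : R^2 = (N:ℝ)^3 := Real.sq_sqrt (by positivity)
  have hm0 : (0:ℝ) ≤ (m:ℝ) := Nat.cast_nonneg _
  have hN0 : (0:ℝ) ≤ (N:ℝ) := Nat.cast_nonneg _
  have hp0 : 0 ≤ s * R := mul_nonneg hs0 hR0
  have hsR : (s * R)^2 = ((t:ℝ) - 1) * (N:ℝ)^3 := by rw [mul_pow, hs2, hR2]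
  have h4' : 4 * (m:ℝ)^2 ≤ (s * R)^2 + 2 * (m:ℝ) * (N:ℝ) := by rw [hsR]; linarith
  have h2m : 2 * (m:ℝ) ≤ (N:ℝ) + s * R := by
    by_contra hcon
    push_neg at hcon
    have hM0 : 0 < 2 * (m:ℝ) := by linarith
    have e1 : 2 * (m:ℝ) * ((N:ℝ) + s * R) < 2 * (m:ℝ) * (2 * (m:ℝ)) :=
      mul_lt_mul_of_pos_left hcon hM0
    have e2 : (s * R) * ((N:ℝ) + s * R) ≤ (s * R) * (2 * (m:ℝ)) :=
      mul_le_mul_of_nonneg_left hcon.le hp0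
    have e3 : 0 ≤ (s * R) * (N:ℝ) := mul_nonneg hp0 hN0
    ring_nf at e1 e2 e3 h4'
    linarith [e1, e2, e3, h4']
  -- now compare with n*k
  have hNk : (N:ℝ) ≤ ((n*k : ℕ) : ℝ) := by exact_mod_cast hN
  have hRk : R ≤ Real.sqrt (((n*k : ℕ) : ℝ)^3) := by
    apply Real.sqrt_le_sqrt
    exact pow_le_pow_left₀ hN0 hNk 3
  have hEl : (n:ℝ) * n - n ≤ 2 * (m:ℝ) := by
    have h2 : n ≤ n * n := by nlinarith [Nat.zero_le n]
    have := (Nat.cast_le (α := ℝ)).2 hE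
    rw [Nat.cast_sub h2] at this
    push_cast at this ⊢
    linarith
  have : s * R ≤ s * Real.sqrt (((n*k : ℕ) : ℝ)^3) := mul_le_mul_of_nonneg_left hRk hs0
  linarith

lemma analysis_lemma (t : ℕ) (ht : 2 ≤ t) (ε : ℝ) (hε : 0 < ε) :
    ∃ n₀ : ℕ, ∀ n : ℕ, n₀ ≤ n → ∀ k : ℕ,
      ((n : ℝ) * n - n ≤ ((n * k : ℕ) : ℝ)
        + Real.sqrt ((t : ℝ) - 1) * Real.sqrt (((n * k : ℕ) : ℝ) ^ 3)) →
      ((t : ℝ) ^ (-(1:ℝ)/3) - ε) * (n : ℝ) ^ ((1:ℝ)/3) ≤ (k : ℝ) := by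
  have ht0 : (0:ℝ) < (t:ℝ) := by exact_mod_cast (by omega : 0 < t)
  have ht1 : (2:ℝ) ≤ (t:ℝ) := by exact_mod_cast ht
  set ct : ℝ := (t:ℝ) ^ (-(1:ℝ)/3) with hctdef
  set c : ℝ := ct - ε with hcdef
  rcases le_or_gt c 0 with hc0 | hc0
  · refine ⟨1, fun n hn k _ => ?_⟩
    have h1 : c * (n:ℝ) ^ ((1:ℝ)/3) ≤ 0 :=
      mul_nonpos_of_nonpos_of_nonneg hc0 (Real.rpow_nonneg (Nat.cast_nonneg n) _)
    exact h1.trans (Nat.cast_nonneg k)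
  · have hctc : c < ct := by rw [hcdef]; linarith
    have hct0 : 0 < ct := Real.rpow_pos_of_pos ht0 _
    have hct3 : ct ^ (3:ℕ) = (t:ℝ)⁻¹ := by
      rw [hctdef, ← Real.rpow_natCast ((t:ℝ) ^ (-(1:ℝ)/3)) 3, ← Real.rpow_mul ht0.le]
      norm_num
      rw [Real.rpow_neg_one]
    set θ : ℝ := Real.sqrt ((t:ℝ) - 1) * Real.sqrt (c^3) with hθdef
    have hθ0 : 0 ≤ θ := mul_nonneg (Real.sqrt_nonneg _) (Real.sqrt_nonneg _)
    have hθsq : θ^2 = ((t:ℝ) - 1) * c^3 := by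
      rw [hθdef, mul_pow, Real.sq_sqrt (by linarith), Real.sq_sqrt (by positivity)]
    have hc3 : c^3 < (t:ℝ)⁻¹ := by
      calc c^3 < ct^3 := by
            apply pow_lt_pow_left₀ hctc hc0.le
            norm_num
        _ = (t:ℝ)⁻¹ := hct3
    have hθsq1 : θ^2 < 1 := by
      have h1 : ((t:ℝ)-1) * c^3 < ((t:ℝ)-1) * (t:ℝ)⁻¹ :=
        mul_lt_mul_of_pos_left hc3 (by linarith)
      have h2 : ((t:ℝ)-1) * (t:ℝ)⁻¹ < 1 := by
        rw [sub_mul, mul_inv_cancel₀ (ne_of_gt ht0)]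
        have : 0 < (t:ℝ)⁻¹ := by positivity
        linarith
      rw [hθsq]; exact h1.trans h2
    have hθ1 : θ < 1 := by nlinarith [hθ0]
    set B : ℝ := max 1 (Real.sqrt ((c+1)/(1-θ))) with hBdef
    have hB1 : (1:ℝ) ≤ B := le_max_left _ _
    have hBsq : (c+1)/(1-θ) ≤ B^2 := by
      have hle : Real.sqrt ((c+1)/(1-θ)) ≤ B := le_max_right _ _
      have h0 : 0 ≤ (c+1)/(1-θ) := div_nonneg (by linarith) (by linarith)
      calc (c+1)/(1-θ) = (Real.sqrt ((c+1)/(1-θ)))^2 := (Real.sq_sqrt h0).symm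
        _ ≤ B^2 := pow_le_pow_left₀ (Real.sqrt_nonneg _) hle 2
    refine ⟨⌈B^3⌉₊, fun n hn k hineq => ?_⟩
    have hnB : B^3 ≤ (n:ℝ) := by
      calc B^3 ≤ (⌈B^3⌉₊ : ℝ) := Nat.le_ceil _
        _ ≤ (n:ℝ) := by exact_mod_cast hn
    set x : ℝ := (n:ℝ) ^ ((1:ℝ)/3) with hxdef
    have hx0 : 0 ≤ x := Real.rpow_nonneg (Nat.cast_nonneg n) _
    have hx3 : x ^ (3:ℕ) = (n:ℝ) := by
      rw [hxdef, ← Real.rpow_natCast ((n:ℝ) ^ ((1:ℝ)/3)) 3, ← Real.rpow_mul (Nat.cast_nonneg n)]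
      norm_num
    have hBx : B ≤ x := le_of_pow_le_pow_left₀ (n := 3) (by norm_num) hx0 (by rw [hx3]; exact hnB)
    have hx1 : (1:ℝ) ≤ x := hB1.trans hBx
    have hx3pos : (0:ℝ) < x^3 := by positivity
    by_contra hk
    push_neg at hk
    have hnk : ((n*k:ℕ):ℝ) = (n:ℝ) * (k:ℝ) := by push_cast; ring
    have hnkx : ((n*k:ℕ):ℝ) < c * x^4 := by
      rw [hnk, ← hx3]
      calc x^3 * (k:ℝ) < x^3 * (c * x) := by
            exact mul_lt_mul_of_pos_left hk hx3pos
        _ = c * x^4 := by ring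
    have hnk0 : (0:ℝ) ≤ ((n*k:ℕ):ℝ) := Nat.cast_nonneg _
    have hsq : Real.sqrt (((n*k:ℕ):ℝ)^3) ≤ Real.sqrt (c^3) * x^6 := by
      have h1 : ((n*k:ℕ):ℝ)^3 ≤ (c*x^4)^3 := pow_le_pow_left₀ hnk0 hnkx.le 3
      have h2 : (c*x^4)^3 = c^3 * (x^6)^2 := by ring
      calc Real.sqrt (((n*k:ℕ):ℝ)^3) ≤ Real.sqrt ((c*x^4)^3) := Real.sqrt_le_sqrt h1
        _ = Real.sqrt (c^3) * x^6 := by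
            rw [h2, Real.sqrt_mul (by positivity), Real.sqrt_sq (by positivity)]
    rw [← hx3] at hineq
    have hmul : Real.sqrt ((t:ℝ)-1) * Real.sqrt (((n*k:ℕ):ℝ)^3)
        ≤ θ * x^6 := by
      calc Real.sqrt ((t:ℝ)-1) * Real.sqrt (((n*k:ℕ):ℝ)^3)
          ≤ Real.sqrt ((t:ℝ)-1) * (Real.sqrt (c^3) * x^6) :=
            mul_le_mul_of_nonneg_left hsq (Real.sqrt_nonneg _)
        _ = θ * x^6 := by rw [hθdef]; ring
    have hmain : x^6 - x^3 < c * x^4 + θ * x^6 := by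
      have e : x^(3:ℕ) * x^(3:ℕ) = x^6 := by ring
      linarith [hineq, hmul, hnkx]
    have h1 : (c+1) ≤ (1-θ) * x^2 := by
      have hθlt : (0:ℝ) < 1 - θ := by linarith
      rw [div_le_iff₀ hθlt] at hBsq
      have hx2 : B^2 ≤ x^2 := pow_le_pow_left₀ (by linarith) hBx 2
      calc (c+1) ≤ B^2 * (1-θ) := hBsq
        _ ≤ x^2 * (1-θ) := mul_le_mul_of_nonneg_right hx2 (by linarith)
        _ = (1-θ) * x^2 := by ring
    have h2 : (c+1) * x^4 ≤ (1-θ) * x^2 * x^4 :=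
      mul_le_mul_of_nonneg_right h1 (by positivity)
    have h3 : x^3 ≤ x^4 := pow_le_pow_right₀ hx1 (by norm_num)
    have h4 : (1-θ) * x^2 * x^4 = (1-θ) * x^6 := by ring
    linarith [hmain, h2, h3, h4]

/-- For `t ≥ 2` there is a constant `C > 0` with
`f(n, K_{2,t}) ≥ C n^(1/3)` for all large `n`; in particular one may take
`C = t^(-1/3) - o(1)`. -/
theorem splitNumber_K2t_lower (t : ℕ) (ht : 2 ≤ t) :
    (∃ C : ℝ, 0 < C ∧ ∃ n₀ : ℕ, ∀ n : ℕ, n₀ ≤ n →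
      C * (n : ℝ) ^ ((1:ℝ)/3) ≤
        (splitNumber n (completeBipartiteGraph (Fin 2) (Fin t)) : ℝ)) ∧
    ∀ ε : ℝ, 0 < ε → ∃ n₀ : ℕ, ∀ n : ℕ, n₀ ≤ n →
      ((t : ℝ) ^ (-(1:ℝ)/3) - ε) * (n : ℝ) ^ ((1:ℝ)/3) ≤
        (splitNumber n (completeBipartiteGraph (Fin 2) (Fin t)) : ℝ) := by
  have ht0 : (0:ℝ) < (t:ℝ) ^ (-(1:ℝ)/3) :=
    Real.rpow_pos_of_pos (by exact_mod_cast (by omega : 0 < t)) _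
  have main : ∀ ε : ℝ, 0 < ε → ∃ n₀ : ℕ, ∀ n : ℕ, n₀ ≤ n →
      ((t : ℝ) ^ (-(1:ℝ)/3) - ε) * (n : ℝ) ^ ((1:ℝ)/3) ≤
        (splitNumber n (completeBipartiteGraph (Fin 2) (Fin t)) : ℝ) := by
    intro ε hε
    obtain ⟨n₀, hmain⟩ := analysis_lemma t ht ε hε
    refine ⟨n₀, fun n hn => ?_⟩
    have hne : {k : ℕ | ExistsNKGraphFree n k (completeBipartiteGraph (Fin 2) (Fin t))}.Nonempty :=
      ⟨n, existsNKGraphFree_matching t n ht⟩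
    have hmem : ExistsNKGraphFree n (splitNumber n (completeBipartiteGraph (Fin 2) (Fin t)))
        (completeBipartiteGraph (Fin 2) (Fin t)) := Nat.sInf_mem hne
    exact hmain n hn _ (key_ineq t n _ ht hmem)
  refine ⟨⟨(t:ℝ) ^ (-(1:ℝ)/3) / 2, by linarith, ?_⟩, main⟩
  obtain ⟨n₀, h⟩ := main ((t:ℝ) ^ (-(1:ℝ)/3) / 2) (by linarith)
  refine ⟨n₀, fun n hn => ?_⟩
  have h2 := h n hn
  have e : (t:ℝ) ^ (-(1:ℝ)/3) - (t:ℝ) ^ (-(1:ℝ)/3) / 2 = (t:ℝ) ^ (-(1:ℝ)/3) / 2 := by ring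
  rwa [e] at h2
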